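/- Suppose each player k has a concave valuation v_k : ℝ^m → ℝ, nonnegative on nonnegative bundles, with v_i(0) = 0 for a fixed player i. Let x* be a feasible allocation maximizing Π_k v_k(x_k)^{b_k} over all feasible allocations, with v_k(x*_k) > 0 for every k, and let x*_{-i} be any feasible allocation. For each k ≠ i define the proportional change d_k by v_k((x*_{-i})_k) = (1 + d_k)·v_k(x*_k). Then Σ_{k≠i} b_k·d_k ≤ b_i. -/

import Mathlib

open Finset

lemma log_lb {u : ℝ} (hu : -(1/2) ≤ u) : u - 2*u^2 ≤ Real.log (1+u) := by
  have h1 : (0:ℝ) < 1 + u := by linarith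
  have h2 := Real.log_le_sub_one_of_pos (inv_pos.2 h1)
  rw [Real.log_inv] at h2
  have h4 : (1+u)⁻¹ * (1+u) = 1 := inv_mul_cancel₀ h1.ne'
  nlinarith [sq_nonneg u, inv_pos.2 h1]


/-- If `x*` maximizes the weighted Nash product and `x*_{-i}` is any feasible
allocation giving the empty bundle to player `i`, then the proportional changes `d_k` defined by
`v_k((x*_{-i})_k) = (1 + d_k)·v_k(x*_k)` satisfy `∑_{k≠i} b_k·d_k ≤ b_i`. -/
theorem stmt_15 {n m : ℕ} (hn : 2 ≤ n) (i : Fin n)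
    (v : Fin n → (Fin m → ℝ) → ℝ) (b : Fin n → ℝ)
    (hb : ∀ k, 1 ≤ b k)
    (hv_nonneg : ∀ k (y : Fin m → ℝ), (∀ j, 0 ≤ y j) → 0 ≤ v k y)
    (hv_concave : ∀ k, ConcaveOn ℝ Set.univ (v k))
    (hvi_zero : v i 0 = 0)
    (xstar : Fin n → Fin m → ℝ)
    (hxstar_nonneg : ∀ k j, 0 ≤ xstar k j) (hxstar_feas : ∀ j, ∑ k, xstar k j ≤ 1)
    (hxstar_max : ∀ x : Fin n → Fin m → ℝ,
      (∀ k j, 0 ≤ x k j) → (∀ j, ∑ k, x k j ≤ 1) →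
      ∏ k, v k (x k) ^ b k ≤ ∏ k, v k (xstar k) ^ b k)
    (hpos : ∀ k, 0 < v k (xstar k))
    -- x*_{-i}, extended by giving the empty bundle to player i, is feasible
    (xmi : Fin n → Fin m → ℝ)
    (hxmi_nonneg : ∀ k j, 0 ≤ xmi k j) (hxmi_feas : ∀ j, ∑ k, xmi k j ≤ 1)
    (hxmi_i : xmi i = 0)
    (d : Fin n → ℝ)
    (hd : ∀ k, k ≠ i → v k (xmi k) = (1 + d k) * v k (xstar k)) :
    ∑ k ∈ univ.erase i, b k * d k ≤ b i := by
  -- d k ≥ -1 for k ≠ i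
  have hd_ge : ∀ k, k ≠ i → -1 ≤ d k := by
    intro k hk
    have h1 : 0 ≤ v k (xmi k) := hv_nonneg k _ (hxmi_nonneg k)
    rw [hd k hk] at h1
    nlinarith [hpos k]
  -- key inequality from optimality + concavity
  have key : ∀ t : ℝ, 0 < t → t < 1 →
      b i * Real.log (1 - t) + ∑ k ∈ univ.erase i, b k * Real.log (1 + t * d k) ≤ 0 := by
    intro t ht ht1
    set e : Fin n → ℝ := fun k => if k = i then 1 - t else 1 + t * d k with he_def
    have he_pos : ∀ k, 0 < e k := by
      intro k
      by_cases hk : k = i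
      · simp [he_def, hk]; linarith
      · simp [he_def, hk]
        nlinarith [hd_ge k hk]
    set c : Fin n → ℝ := fun k => v k (xstar k) * e k with hc_def
    have hc_pos : ∀ k, 0 < c k := fun k => mul_pos (hpos k) (he_pos k)
    set xt : Fin n → Fin m → ℝ := fun k => (1 - t) • xstar k + t • xmi k with hxt_def
    have hxt_nonneg : ∀ k j, 0 ≤ xt k j := by
      intro k j
      have := hxstar_nonneg k j; have := hxmi_nonneg k j
      simp only [hxt_def, Pi.add_apply, Pi.smul_apply, smul_eq_mul]
      nlinarith
    have hxt_feas : ∀ j, ∑ k, xt k j ≤ 1 := by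
      intro j
      have h1 := hxstar_feas j; have h2 := hxmi_feas j
      have : ∑ k, xt k j = (1 - t) * ∑ k, xstar k j + t * ∑ k, xmi k j := by
        simp only [hxt_def, Pi.add_apply, Pi.smul_apply, smul_eq_mul, mul_sum]
        rw [sum_add_distrib]
      rw [this]
      nlinarith
    have hconc : ∀ k, (1 - t) * v k (xstar k) + t * v k (xmi k) ≤ v k (xt k) := by
      intro k
      have := (hv_concave k).2 (Set.mem_univ (xstar k)) (Set.mem_univ (xmi k))
        (by linarith : (0:ℝ) ≤ 1 - t) ht.le (by ring)
      simpa [smul_eq_mul] using this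
    have hc_le : ∀ k, c k ≤ v k (xt k) := by
      intro k
      refine le_trans ?_ (hconc k)
      by_cases hk : k = i
      · rw [hk, hxmi_i, hvi_zero]
        simp only [hc_def, he_def, if_pos]
        exact le_of_eq (by ring)
      · rw [hd k hk]
        simp only [hc_def, he_def, if_neg hk]
        exact le_of_eq (by ring)
    have hprodle : ∏ k, c k ^ b k ≤ ∏ k, v k (xstar k) ^ b k := by
      refine le_trans ?_ (hxstar_max xt hxt_nonneg hxt_feas)
      refine prod_le_prod (fun k _ => (Real.rpow_pos_of_pos (hc_pos k) _).le) ?_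
      intro k _
      exact Real.rpow_le_rpow (hc_pos k).le (hc_le k) (le_trans zero_le_one (hb k))
    have hcprod_pos : 0 < ∏ k, c k ^ b k :=
      prod_pos fun k _ => Real.rpow_pos_of_pos (hc_pos k) _
    have hlog := Real.log_le_log hcprod_pos hprodle
    rw [Real.log_prod (fun k _ => (Real.rpow_pos_of_pos (hc_pos k) _).ne'),
        Real.log_prod (fun k _ => (Real.rpow_pos_of_pos (hpos k) _).ne')] at hlog
    have e1 : ∑ k, Real.log (c k ^ b k) = ∑ k, b k * Real.log (c k) :=
      sum_congr rfl fun k _ => Real.log_rpow (hc_pos k) _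
    have e2 : ∑ k, Real.log (v k (xstar k) ^ b k) = ∑ k, b k * Real.log (v k (xstar k)) :=
      sum_congr rfl fun k _ => Real.log_rpow (hpos k) _
    rw [e1, e2] at hlog
    have hsum : ∑ k, b k * Real.log (c k)
        = ∑ k, b k * Real.log (v k (xstar k)) + ∑ k, b k * Real.log (e k) := by
      rw [← sum_add_distrib]
      refine sum_congr rfl fun k _ => ?_
      rw [hc_def]
      rw [Real.log_mul (hpos k).ne' (he_pos k).ne']
      ring
    rw [hsum] at hlog
    have hkey0 : ∑ k, b k * Real.log (e k) ≤ 0 := by linarith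
    have hsplit : ∑ k, b k * Real.log (e k)
        = b i * Real.log (e i) + ∑ k ∈ univ.erase i, b k * Real.log (e k) :=
      (Finset.add_sum_erase univ _ (mem_univ i)).symm
    rw [hsplit] at hkey0
    have hei : e i = 1 - t := by simp [he_def]
    have hek : ∀ k ∈ univ.erase i, b k * Real.log (e k) = b k * Real.log (1 + t * d k) := by
      intro k hk
      have : k ≠ i := (mem_erase.1 hk).1
      simp [he_def, this]
    rw [hei, sum_congr rfl hek] at hkey0
    exact hkey0
  -- now take the limit via quadratic bounds
  set M : ℝ := 1 + ∑ k ∈ univ.erase i, |d k| with hM_def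
  have hM1 : 1 ≤ M := by
    have : 0 ≤ ∑ k ∈ univ.erase i, |d k| := sum_nonneg fun k _ => abs_nonneg _
    rw [hM_def]; linarith
  have hMpos : 0 < M := by linarith
  have hdM : ∀ k ∈ univ.erase i, |d k| ≤ M := by
    intro k hk
    have := Finset.single_le_sum (f := fun k => |d k|) (fun k _ => abs_nonneg _) hk
    rw [hM_def]; linarith
  set C : ℝ := b i + ∑ k ∈ univ.erase i, b k * (d k)^2 with hC_def
  have hCpos : 0 < C := by
    have h1 : 0 ≤ ∑ k ∈ univ.erase i, b k * (d k)^2 :=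
      sum_nonneg fun k _ => mul_nonneg (le_trans zero_le_one (hb k)) (sq_nonneg _)
    have := hb i
    rw [hC_def]; linarith
  have bound : ∀ t : ℝ, 0 < t → t ≤ 1/(2*M) →
      (∑ k ∈ univ.erase i, b k * d k) - b i ≤ 2 * t * C := by
    intro t ht htM
    have htle : t ≤ 1/2 := by
      have : 1/(2*M) ≤ 1/2 := by
        apply div_le_div_of_nonneg_left (by norm_num) (by norm_num)
        linarith
      linarith
    have ht1 : t < 1 := by linarith
    have hk := key t ht ht1
    -- lower bound for log(1-t)
    have hl1 : -t - 2*t^2 ≤ Real.log (1 - t) := by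
      have := log_lb (u := -t) (by linarith)
      have h' : 1 + -t = 1 - t := by ring
      rw [h'] at this
      nlinarith [this]
    -- lower bound for each log(1 + t d k)
    have hl2 : ∀ k ∈ univ.erase i, t * d k - 2*(t * d k)^2 ≤ Real.log (1 + t * d k) := by
      intro k hk'
      apply log_lb
      have h1 : t * |d k| ≤ t * M := mul_le_mul_of_nonneg_left (hdM k hk') ht.le
      have h2 : t * M ≤ 1/2 := by
        have h2a : t * M ≤ (1/(2*M)) * M := mul_le_mul_of_nonneg_right htM hMpos.le
        have h2b : (1/(2*M)) * M = 1/2 := by field_simp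
        linarith
      have h3 : |t * d k| ≤ 1/2 := by
        rw [abs_mul, abs_of_pos ht]; exact h1.trans h2
      have := neg_abs_le (t * d k)
      linarith
    have hsum2 : ∑ k ∈ univ.erase i, b k * (t * d k - 2*(t * d k)^2)
        ≤ ∑ k ∈ univ.erase i, b k * Real.log (1 + t * d k) := by
      refine sum_le_sum fun k hk' => ?_
      exact mul_le_mul_of_nonneg_left (hl2 k hk') (le_trans zero_le_one (hb k))
    have hexp : ∑ k ∈ univ.erase i, b k * (t * d k - 2*(t * d k)^2)
        = t * (∑ k ∈ univ.erase i, b k * d k) - 2*t^2 * (∑ k ∈ univ.erase i, b k * (d k)^2) := by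
      rw [mul_sum, mul_sum, ← sum_sub_distrib]
      refine sum_congr rfl fun k _ => by ring
    rw [hexp] at hsum2
    have hbi : 0 < b i := lt_of_lt_of_le zero_lt_one (hb i)
    have h5 : b i * (-t - 2*t^2) ≤ b i * Real.log (1 - t) :=
      mul_le_mul_of_nonneg_left hl1 hbi.le
    -- combine
    have h6 : b i * (-t - 2*t^2) + t * (∑ k ∈ univ.erase i, b k * d k)
        - 2*t^2 * (∑ k ∈ univ.erase i, b k * (d k)^2) ≤ 0 := by linarith
    have h7 : t * ((∑ k ∈ univ.erase i, b k * d k) - b i) ≤ 2*t^2 * C := by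
      rw [hC_def]; nlinarith [h6]
    have := (mul_le_mul_iff_right₀ ht).mp (by nlinarith [h7] : t * ((∑ k ∈ univ.erase i, b k * d k) - b i) ≤ t * (2 * t * C))
    linarith
  -- conclude
  by_contra hcon
  push_neg at hcon
  set A : ℝ := (∑ k ∈ univ.erase i, b k * d k) - b i with hA_def
  have hApos : 0 < A := by rw [hA_def]; linarith
  set t0 : ℝ := min (1/(2*M)) (A/(4*C)) with ht0_def
  have ht0pos : 0 < t0 := lt_min (by positivity) (by positivity)
  have h1 := bound t0 ht0pos (min_le_left _ _)
  have h2 : t0 ≤ A/(4*C) := min_le_right _ _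
  have h3 : 2 * t0 * C ≤ A/2 := by
    have := mul_le_mul_of_nonneg_right h2 hCpos.le
    rw [div_mul_eq_mul_div, mul_comm] at this
    have h4 : C * (A / (4*C)) = A/4 := by field_simp
    nlinarith [this]
  have : A ≤ A/2 := by
    calc A = (∑ k ∈ univ.erase i, b k * d k) - b i := hA_def
    _ ≤ 2 * t0 * C := h1
    _ ≤ A/2 := h3
  linarith
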